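/- arXiv:2101.02610 — 2 statements merged into one kernel-verified Lean document; each statement's English description precedes it below -/
import Mathlib

section
/- Let (X, d, T) be a topological dynamical system, μ ∈ E_T(X), δ ∈ (0,1), ε > 0 and c ≥ 0. If for μ-a.e. x ∈ X one has limsup_{n→∞} −(1/n) log μ(B_n(x,ε)) ≤ c, then h_μ^K(3ε, δ) ≤ c. In particular, the Katok entropy h_μ^K(3ε, δ) is bounded above by the Brin–Katok local entropy h_μ^{BK}(ε) (the μ-a.e. constant value of x ↦ limsup_{n→∞} −(1/n) log μ(B_n(x,ε))). -/
open Filter MeasureTheory Set Topology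

variable {X : Type*}

/-- The dynamical (Bowen) metric `d_n(x,y) = max_{0 ≤ k ≤ n-1} d(T^k x, T^k y)`. -/
noncomputable def dynDist [MetricSpace X] (T : X → X) (n : ℕ) (x y : X) : ℝ :=
  ⨆ k ∈ Finset.range n, dist (T^[k] x) (T^[k] y)

/-- The open dynamical ball `B_n(x, ε) = {y : d_n(x,y) < ε}`. -/
def dynBall [MetricSpace X] (T : X → X) (n : ℕ) (x : X) (ε : ℝ) : Set X :=
  {y | dynDist T n x y < ε}

/-- `s_n(K, ε)`: the maximal cardinality of an `(n,ε)`-separated subset of `K`. -/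
noncomputable def sepNum [MetricSpace X] (T : X → X) (n : ℕ) (K : Set X) (ε : ℝ) : ℕ :=
  sSup {m | ∃ E : Finset X, ↑E ⊆ K ∧
    (∀ x ∈ E, ∀ y ∈ E, x ≠ y → ε < dynDist T n x y) ∧ E.card = m}

/-- `S(K, ε) = limsup_n (1/n) log s_n(K, ε)`. -/
noncomputable def sepEnt [MetricSpace X] (T : X → X) (K : Set X) (ε : ℝ) : EReal :=
  limsup (fun n : ℕ => ((Real.log (sepNum T n K ε) / n : ℝ) : EReal)) atTop

/-- `r_n(K, ε)`: the minimal cardinality of an `(n,ε)`-spanning set for `K`. -/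
noncomputable def spanNum [MetricSpace X] (T : X → X) (n : ℕ) (K : Set X) (ε : ℝ) : ℕ :=
  sInf {m | ∃ F : Finset X, (∀ x ∈ K, ∃ y ∈ F, dynDist T n x y ≤ ε) ∧ F.card = m}

/-- `R(K, ε) = limsup_n (1/n) log r_n(K, ε)`. -/
noncomputable def spanEnt [MetricSpace X] (T : X → X) (K : Set X) (ε : ℝ) : EReal :=
  limsup (fun n : ℕ => ((Real.log (spanNum T n K ε) / n : ℝ) : EReal)) atTop

/-- Upper metric mean dimension. -/
noncomputable def mdimUpper [MetricSpace X] (T : X → X) : EReal :=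
  limsup (fun ε : ℝ => sepEnt T univ ε / ((Real.log (1 / ε) : ℝ) : EReal)) (𝓝[>] (0:ℝ))

/-- Lower metric mean dimension. -/
noncomputable def mdimLower [MetricSpace X] (T : X → X) : EReal :=
  liminf (fun ε : ℝ => sepEnt T univ ε / ((Real.log (1 / ε) : ℝ) : EReal)) (𝓝[>] (0:ℝ))

/-- The ergodic `T`-invariant Borel probability measures. -/
def ergodicMeasures [MeasurableSpace X] (T : X → X) : Set (Measure X) :=
  {μ | IsProbabilityMeasure μ ∧ Ergodic T μ}

/-- `U` is a finite open cover of `X`. -/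
def IsFiniteOpenCover [TopologicalSpace X] (U : Finset (Set X)) : Prop :=
  (∀ V ∈ U, IsOpen V) ∧ ⋃₀ (U : Set (Set X)) = univ

/-- The cover `U^n = ⋁_{i=0}^{n-1} T^{-i} U`. -/
def dynRefine (T : X → X) (U : Finset (Set X)) (n : ℕ) : Set (Set X) :=
  {V | ∃ f : Fin n → Set X, (∀ i, f i ∈ U) ∧ V = ⋂ i : Fin n, T^[(i : ℕ)] ⁻¹' f i}

/-- `N(C)`: the minimal cardinality of a subcover of `C`. -/
noncomputable def coverNum (C : Set (Set X)) : ℕ :=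
  sInf {m | ∃ F : Finset (Set X), ↑F ⊆ C ∧ ⋃₀ (F : Set (Set X)) = univ ∧ F.card = m}

/-- `N_μ(U^n, δ)`: minimal number of members of `U^n` needed to cover a set of measure ≥ δ. -/
noncomputable def shapiraNum [MeasurableSpace X] (T : X → X) (μ : Measure X)
    (U : Finset (Set X)) (n : ℕ) (δ : ℝ) : ℕ :=
  sInf {m | ∃ F : Finset (Set X), ↑F ⊆ dynRefine T U n ∧
    ENNReal.ofReal δ ≤ μ (⋃₀ (F : Set (Set X))) ∧ F.card = m}

/-- Shapira's entropy `h_μ^S(U, δ) = limsup_n (1/n) log N_μ(U^n, δ)`. -/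
noncomputable def shapiraEnt [MeasurableSpace X] (T : X → X) (μ : Measure X)
    (U : Finset (Set X)) (δ : ℝ) : EReal :=
  limsup (fun n : ℕ => ((Real.log (shapiraNum T μ U n δ) / n : ℝ) : EReal)) atTop

/-- `N_μ^δ(n, ε)`: smallest number of open `(n,ε)`-dynamical balls whose union has
measure `> δ`. -/
noncomputable def katokNum [MetricSpace X] [MeasurableSpace X] (T : X → X) (μ : Measure X)
    (n : ℕ) (ε δ : ℝ) : ℕ :=
  sInf {m | ∃ F : Finset X, ENNReal.ofReal δ < μ (⋃ x ∈ F, dynBall T n x ε) ∧ F.card = m}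

/-- Katok's entropy `h_μ^K(ε, δ) = limsup_n (1/n) log N_μ^δ(n, ε)`. -/
noncomputable def katokEnt [MetricSpace X] [MeasurableSpace X] (T : X → X) (μ : Measure X)
    (ε δ : ℝ) : EReal :=
  limsup (fun n : ℕ => ((Real.log (katokNum T μ n ε δ) / n : ℝ) : EReal)) atTop

/-- Lower Katok entropy `h̲_μ^K(ε, δ) = liminf_n (1/n) log N_μ^δ(n, ε)`. -/
noncomputable def katokEntLower [MetricSpace X] [MeasurableSpace X] (T : X → X) (μ : Measure X)
    (ε δ : ℝ) : EReal :=
  liminf (fun n : ℕ => ((Real.log (katokNum T μ n ε δ) / n : ℝ) : EReal)) atTop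

/-- `Ñ_μ^δ(n, ε)`: smallest number of sets of `d_n`-diameter ≤ ε whose union has
measure `> δ`. -/
noncomputable def katokNumTilde [MetricSpace X] [MeasurableSpace X] (T : X → X) (μ : Measure X)
    (n : ℕ) (ε δ : ℝ) : ℕ :=
  sInf {m | ∃ F : Finset (Set X), (∀ A ∈ F, ∀ x ∈ A, ∀ y ∈ A, dynDist T n x y ≤ ε) ∧
    ENNReal.ofReal δ < μ (⋃₀ (F : Set (Set X))) ∧ F.card = m}

/-- Brin–Katok local entropy `h_μ^{BK}(x, ε) = limsup_n -(1/n) log μ(B_n(x, ε))`. -/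
noncomputable def brinKatok [MetricSpace X] [MeasurableSpace X] (T : X → X) (μ : Measure X)
    (x : X) (ε : ℝ) : EReal :=
  limsup (fun n : ℕ => -(ENNReal.log (μ (dynBall T n x ε))) / (n : EReal)) atTop

/-- Lower Brin–Katok local entropy `h̲_μ^{BK}(x, ε) = liminf_n -(1/n) log μ(B_n(x, ε))`. -/
noncomputable def brinKatokLower [MetricSpace X] [MeasurableSpace X] (T : X → X) (μ : Measure X)
    (x : X) (ε : ℝ) : EReal :=
  liminf (fun n : ℕ => -(ENNReal.log (μ (dynBall T n x ε))) / (n : EReal)) atTop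

/-- Local entropy function `h_d(x, ε) = inf { S(K, ε) : K closed neighborhood of x }`. -/
noncomputable def locEnt [MetricSpace X] (T : X → X) (x : X) (ε : ℝ) : EReal :=
  ⨅ K ∈ {K : Set X | IsClosed K ∧ K ∈ 𝓝 x}, sepEnt T K ε

/-- Local spanning entropy `h̃_d(x, ε) = inf { R(K, ε) : K closed neighborhood of x }`. -/
noncomputable def locSpanEnt [MetricSpace X] (T : X → X) (x : X) (ε : ℝ) : EReal :=
  ⨅ K ∈ {K : Set X | IsClosed K ∧ K ∈ 𝓝 x}, spanEnt T K ε

/-- `U_x^n`: the union of all cells of `U^n` containing `x`. -/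
def dynCoverCell (T : X → X) (U : Finset (Set X)) (n : ℕ) (x : X) : Set X :=
  ⋃₀ {V | V ∈ dynRefine T U n ∧ x ∈ V}

open scoped ENNReal NNReal

section Aux
variable [MetricSpace X] {T : X → X} {n : ℕ} {x y z : X} {ε : ℝ}

lemma dynDist_eq (T : X → X) (n : ℕ) (x y : X) :
    dynDist T n x y = (((Finset.range n).sup fun k => nndist (T^[k] x) (T^[k] y) : ℝ≥0) : ℝ) := by
  set D : ℝ≥0 := (Finset.range n).sup fun k => nndist (T^[k] x) (T^[k] y) with hD
  have hb : ∀ k : ℕ, (⨆ _ : k ∈ Finset.range n, dist (T^[k] x) (T^[k] y)) ≤ (D : ℝ) := by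
    intro k
    by_cases hk : k ∈ Finset.range n
    · rw [ciSup_pos hk, dist_nndist]
      exact_mod_cast Finset.le_sup (f := fun k => nndist (T^[k] x) (T^[k] y)) hk
    · haveI : IsEmpty (k ∈ Finset.range n) := ⟨hk⟩
      rw [Real.iSup_of_isEmpty]
      positivity
  refine le_antisymm (ciSup_le hb) ?_
  rcases Nat.eq_zero_or_pos n with rfl | hn
  · simp only [hD, Finset.range_zero, Finset.sup_empty]
    simp only [dynDist, Finset.range_zero, Finset.notMem_empty]
    haveI : ∀ k : ℕ, IsEmpty (k ∈ (∅ : Finset ℕ)) := fun k => ⟨Finset.notMem_empty k⟩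
    have : ∀ k : ℕ, (⨆ _ : k ∈ (∅ : Finset ℕ), dist (T^[k] x) (T^[k] y)) = 0 := fun k =>
      Real.iSup_of_isEmpty _
    simp [this]
  · obtain ⟨k, hk, hke⟩ := Finset.exists_mem_eq_sup (Finset.range n)
      ⟨0, Finset.mem_range.2 hn⟩ fun k => nndist (T^[k] x) (T^[k] y)
    have hbdd : BddAbove (Set.range fun k : ℕ =>
        ⨆ _ : k ∈ Finset.range n, dist (T^[k] x) (T^[k] y)) :=
      ⟨(D : ℝ), by rintro r ⟨k, rfl⟩; exact hb k⟩
    calc (D : ℝ) = dist (T^[k] x) (T^[k] y) := by rw [hD, hke, dist_nndist]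
    _ = ⨆ _ : k ∈ Finset.range n, dist (T^[k] x) (T^[k] y) := (ciSup_pos (f := fun _ => dist (T^[k] x) (T^[k] y)) hk).symm
    _ ≤ dynDist T n x y := le_ciSup hbdd k

lemma dynDist_nonneg : 0 ≤ dynDist T n x y := by rw [dynDist_eq]; positivity

lemma dynDist_self (T : X → X) (n : ℕ) (x : X) : dynDist T n x x = 0 := by
  rw [dynDist_eq]; simp

lemma dynDist_comm (T : X → X) (n : ℕ) (x y : X) : dynDist T n x y = dynDist T n y x := by
  rw [dynDist_eq, dynDist_eq]; simp [nndist_comm]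

lemma dynDist_triangle (T : X → X) (n : ℕ) (x y z : X) :
    dynDist T n x z ≤ dynDist T n x y + dynDist T n y z := by
  rw [dynDist_eq, dynDist_eq, dynDist_eq]
  have : ((Finset.range n).sup fun k => nndist (T^[k] x) (T^[k] z)) ≤
      ((Finset.range n).sup fun k => nndist (T^[k] x) (T^[k] y)) +
      ((Finset.range n).sup fun k => nndist (T^[k] y) (T^[k] z)) := by
    refine Finset.sup_le fun k hk => ?_
    exact (nndist_triangle _ (T^[k] y) _).trans (add_le_add (Finset.le_sup (f := fun k => nndist (T^[k] x) (T^[k] y)) hk) (Finset.le_sup (f := fun k => nndist (T^[k] y) (T^[k] z)) hk))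
  exact_mod_cast this

lemma dynDist_lt_iff (hε : 0 < ε) :
    dynDist T n x y < ε ↔ ∀ k < n, dist (T^[k] x) (T^[k] y) < ε := by
  rw [dynDist_eq]
  have hcast : (((Finset.range n).sup fun k => nndist (T^[k] x) (T^[k] y) : ℝ≥0) : ℝ) < ε ↔
      ((Finset.range n).sup fun k => nndist (T^[k] x) (T^[k] y)) < (show ℝ≥0 from ⟨ε, hε.le⟩) := by
    rw [← NNReal.coe_lt_coe]
    exact Iff.rfl
  rw [hcast, Finset.sup_lt_iff (by exact_mod_cast hε)]
  constructor
  · intro H k hk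
    have := H k (Finset.mem_range.2 hk)
    rw [dist_nndist]
    exact_mod_cast this
  · intro H k hk
    have := H k (Finset.mem_range.1 hk)
    rw [dist_nndist] at this
    exact_mod_cast this

lemma mem_dynBall_self (hε : 0 < ε) : x ∈ dynBall T n x ε := by
  simp [dynBall, dynDist_self, hε]

lemma isOpen_dynBall (hT : Continuous T) (hε : 0 < ε) : IsOpen (dynBall T n x ε) := by
  have : dynBall T n x ε = ⋂ k ∈ Finset.range n, T^[k] ⁻¹' Metric.ball (T^[k] x) ε := by
    ext y
    simp [dynBall, dynDist_lt_iff hε, Metric.mem_ball, dist_comm]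
  rw [this]
  exact isOpen_biInter_finset fun k _ =>
    (Metric.isOpen_ball).preimage (hT.iterate k)

end Aux

section Theorems

variable [MetricSpace X] [CompactSpace X] [Nonempty X] [MeasurableSpace X] [BorelSpace X]

/-- Katok's entropy at scale `3ε` is bounded above by any μ-a.e. upper bound `c` on the
Brin-Katok local entropy at scale `ε` (from the proof of Theorem 5.2). -/
theorem katokEnt_le_of_ae_brinKatok_le (T : X → X) (hT : IsHomeomorph T)
    (μ : Measure X) (hμ : μ ∈ ergodicMeasures T)
    (δ : ℝ) (hδ : δ ∈ Set.Ioo (0:ℝ) 1) (ε : ℝ) (hε : 0 < ε)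
    (c : ℝ) (hc : 0 ≤ c)
    (h : ∀ᵐ x ∂μ, brinKatok T μ x ε ≤ (c : EReal)) :
    katokEnt T μ (3 * ε) δ ≤ (c : EReal) := by
  obtain ⟨hprob, -⟩ := hμ
  haveI := hprob
  obtain ⟨hδ0, hδ1⟩ := hδ
  have hTc : Continuous T := hT.continuous
  -- reduction to γ > 0
  have key : ∀ γ : ℝ, 0 < γ → katokEnt T μ (3 * ε) δ ≤ ((c + γ : ℝ) : EReal) := by
    intro γ hγ
    classical
    set a : ℕ → ℝ≥0∞ := fun n => ENNReal.ofReal (Real.exp (-((c + γ) * n))) with ha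
    set A : ℕ → Set X := fun N => {x | ∀ n, N ≤ n → a n ≤ μ (dynBall T n x ε)} with hA
    have hmono : Monotone A := fun N M hNM x hx n hn => hx n (hNM.trans hn)
    -- a.e. membership in some A N
    have hG : ∀ᵐ x ∂μ, x ∈ ⋃ N, A N := by
      filter_upwards [h] with x hx
      have hlt : limsup (fun n : ℕ => -(ENNReal.log (μ (dynBall T n x ε))) / (n : EReal)) atTop
          < ((c + γ : ℝ) : EReal) := by
        refine lt_of_le_of_lt hx ?_
        exact_mod_cast (lt_add_iff_pos_right c).2 hγ
      have hev := eventually_lt_of_limsup_lt hlt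
      rw [eventually_atTop] at hev
      obtain ⟨N, hN⟩ := hev
      refine Set.mem_iUnion.2 ⟨max N 1, fun n hn => ?_⟩
      have hN' : N ≤ n := le_trans (le_max_left _ _) hn
      have h1 : 1 ≤ n := le_trans (le_max_right _ _) hn
      have hn0 : (0 : EReal) < (n : EReal) := by exact_mod_cast Nat.pos_of_ne_zero (by omega)
      have hntop : (n : EReal) ≠ ⊤ := by
        exact_mod_cast (EReal.natCast_ne_top n)
      have hdiv := (hN n hN').le
      rw [EReal.div_le_iff_le_mul hn0 hntop] at hdiv
      have hlog : ((-((c + γ) * n) : ℝ) : EReal) ≤ ENNReal.log (μ (dynBall T n x ε)) := by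
        have := EReal.neg_le_of_neg_le hdiv
        refine le_trans (le_of_eq ?_) this
        have hcoen : ((n : ℝ) : EReal) = (n : EReal) := by norm_cast
        calc ((-((c + γ) * n) : ℝ) : EReal)
            = -(((c + γ : ℝ) : EReal) * (((n : ℝ)) : EReal)) := by
              rw [EReal.coe_neg, EReal.coe_mul]
          _ = -((n : EReal) * ((c + γ : ℝ) : EReal)) := by rw [mul_comm, hcoen]
      have := EReal.exp_monotone hlog
      rwa [ENNReal.exp_log, EReal.exp_coe] at this
    -- choose N with μ (A N) > δ
    have hUnion : (1 : ℝ≥0∞) ≤ μ (⋃ N, A N) := by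
      have : μ Set.univ ≤ μ (⋃ N, A N) := by
        refine measure_mono_ae ?_
        filter_upwards [hG] with x hx _ using hx
      simpa using this
    have hten := tendsto_measure_iUnion_atTop (μ := μ) hmono
    have hδlt : ENNReal.ofReal δ < μ (⋃ N, A N) := by
      refine lt_of_lt_of_le ?_ hUnion
      rw [← ENNReal.ofReal_one]
      exact ENNReal.ofReal_lt_ofReal_iff_of_nonneg hδ0.le |>.2 hδ1
    obtain ⟨N₀, hN₀⟩ := (hten.eventually (eventually_gt_nhds hδlt)).exists
    set N := max N₀ 1 with hNdef
    have hAN : ENNReal.ofReal δ < μ (A N) := hN₀.trans_le (measure_mono (hmono (le_max_left _ _)))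
    -- main estimate for n ≥ N
    have hbound : ∀ n, N ≤ n → Real.log (katokNum T μ n (3 * ε) δ) / n ≤ c + γ := by
      intro n hn
      have h1n : 1 ≤ n := le_trans (le_max_right _ _) hn
      have hnpos : (0:ℝ) < n := by exact_mod_cast Nat.pos_of_ne_zero (by omega)
      -- the collection of admissible finsets
      set P : Finset X → Prop := fun E => ↑E ⊆ A N ∧
        (E : Set X).PairwiseDisjoint (fun x => dynBall T n x ε) with hP
      have hcard : ∀ E : Finset X, P E → (E.card : ℝ) ≤ Real.exp ((c + γ) * n) := by
        intro E ⟨hEA, hEd⟩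
        have hmeas : ∀ x ∈ E, MeasurableSet (dynBall T n x ε) :=
          fun x _ => (isOpen_dynBall hTc hε).measurableSet
        have hsum : μ (⋃ x ∈ E, dynBall T n x ε) = ∑ x ∈ E, μ (dynBall T n x ε) :=
          measure_biUnion_finset hEd hmeas
        have hle1 : ∑ x ∈ E, μ (dynBall T n x ε) ≤ 1 := by
          rw [← hsum]; exact prob_le_one
        have heach : ∀ x ∈ E, a n ≤ μ (dynBall T n x ε) := by
          intro x hx
          exact hEA hx n (le_trans hn le_rfl)
        have : (E.card : ℝ≥0∞) * a n ≤ 1 := by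
          calc (E.card : ℝ≥0∞) * a n = ∑ _x ∈ E, a n := by
                rw [Finset.sum_const, nsmul_eq_mul]
          _ ≤ ∑ x ∈ E, μ (dynBall T n x ε) := Finset.sum_le_sum heach
          _ ≤ 1 := hle1
        have hapos : 0 < Real.exp (-((c + γ) * n)) := Real.exp_pos _
        have hane : a n ≠ 0 := by
          simp only [ha, ne_eq, ENNReal.ofReal_eq_zero, not_le]
          exact hapos
        have hcard' : (E.card : ℝ≥0∞) ≤ (a n)⁻¹ := by
          rw [← ENNReal.le_div_iff_mul_le (Or.inl hane) (Or.inl ENNReal.ofReal_ne_top)] at this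
          rwa [ENNReal.div_eq_inv_mul, mul_one] at this
        have hinv : (a n)⁻¹ = ENNReal.ofReal (Real.exp ((c + γ) * n)) := by
          rw [ha]
          rw [← ENNReal.ofReal_inv_of_pos hapos]
          congr 1
          rw [← Real.exp_neg, neg_neg]
        rw [hinv] at hcard'
        rw [← ENNReal.ofReal_natCast] at hcard'
        exact (ENNReal.ofReal_le_ofReal_iff (Real.exp_pos _).le).1 hcard'
      -- maximal E
      set C : Set ℕ := {m | ∃ E : Finset X, P E ∧ E.card = m} with hC
      have hCne : C.Nonempty := ⟨0, ∅, ⟨by simp, by simp⟩, rfl⟩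
      have hCbdd : BddAbove C := by
        refine ⟨⌊Real.exp ((c + γ) * n)⌋₊, fun m ⟨E, hE, hcardE⟩ => ?_⟩
        exact Nat.le_floor (hcardE ▸ hcard E hE)
      obtain ⟨E, hE, hcardE⟩ := Nat.sSup_mem hCne hCbdd
      -- maximality: every y in A N meets some ball
      have hmax : ∀ y ∈ A N, ∃ x ∈ E, ¬Disjoint (dynBall T n x ε) (dynBall T n y ε) := by
        intro y hy
        by_contra hcon
        push_neg at hcon
        have hynE : y ∉ E := by
          intro hyE
          exact absurd (hcon y hyE)
            (Set.not_disjoint_iff.2 ⟨y, mem_dynBall_self hε, mem_dynBall_self hε⟩)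
        have hP' : P (insert y E) := by
          constructor
          · intro z hz
            rcases Finset.mem_insert.1 (Finset.mem_coe.1 hz) with rfl | hz'
            · exact hy
            · exact hE.1 hz'
          · rw [Finset.coe_insert]
            refine hE.2.insert fun x hx _ => ?_
            exact (hcon x hx).symm
        have : (insert y E).card ∈ C := ⟨insert y E, hP', rfl⟩
        have hle := le_csSup hCbdd this
        rw [Finset.card_insert_of_notMem hynE, hcardE] at hle
        omega
      -- covering
      have hcover : A N ⊆ ⋃ x ∈ E, dynBall T n x (3 * ε) := by
        intro y hy
        obtain ⟨x, hxE, hxy⟩ := hmax y hy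
        obtain ⟨z, hz1, hz2⟩ := Set.not_disjoint_iff.1 hxy
        refine Set.mem_biUnion hxE ?_
        have h1 : dynDist T n x z < ε := hz1
        have h2 : dynDist T n z y < ε := by
          rw [dynDist_comm]; exact hz2
        have := (dynDist_triangle T n x z y).trans_lt (add_lt_add h1 h2)
        show dynDist T n x y < 3 * ε
        linarith
      have hμcover : ENNReal.ofReal δ < μ (⋃ x ∈ E, dynBall T n x (3 * ε)) :=
        hAN.trans_le (measure_mono hcover)
      have hkatok : katokNum T μ n (3 * ε) δ ≤ E.card :=
        Nat.sInf_le ⟨E, hμcover, rfl⟩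
      -- conclude
      have hlogle : Real.log (katokNum T μ n (3 * ε) δ) ≤ (c + γ) * n := by
        rcases Nat.eq_zero_or_pos (katokNum T μ n (3 * ε) δ) with h0 | hpos
        · rw [h0]
          simp only [Nat.cast_zero, Real.log_zero]
          positivity
        · refine (Real.log_le_iff_le_exp (by exact_mod_cast hpos)).2 ?_
          calc ((katokNum T μ n (3 * ε) δ : ℝ)) ≤ (E.card : ℝ) := by exact_mod_cast hkatok
          _ ≤ Real.exp ((c + γ) * n) := hcard E hE
      rw [div_le_iff₀ hnpos]
      linarith [hlogle]
    -- limsup bound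
    refine limsup_le_of_le (by isBoundedDefault) ?_
    rw [eventually_atTop]
    exact ⟨N, fun n hn => by exact_mod_cast hbound n hn⟩
  -- from key to conclusion
  by_contra hcon
  push_neg at hcon
  obtain ⟨r, hr1, hr2⟩ := EReal.exists_between_coe_real hcon
  have hγ : (0:ℝ) < r - c := by
    have : (c : EReal) < (r : EReal) := hr1
    exact sub_pos.2 (by exact_mod_cast this)
  have := key (r - c) hγ
  rw [show c + (r - c) = r by ring] at this
  exact absurd (this.trans_lt hr2) (lt_irrefl _)

end Theorems
end

section
/- Let (X, d, T) be a topological dynamical system. Then the upper metric mean dimension satisfies mdim̄_M(X,d,T) = limsup_{ε→0} (1/log(1/ε)) · sup_{x ∈ X} h_d(x, ε), where h_d is the local entropy function. -/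
open Filter MeasureTheory Set Topology

variable {X : Type*}

section A
variable [MetricSpace X]

lemma dynDist_le {T : X → X} {n : ℕ} {x y : X} {r : ℝ} (hr : 0 ≤ r)
    (h : ∀ k < n, dist (T^[k] x) (T^[k] y) ≤ r) : dynDist T n x y ≤ r := by
  refine Real.iSup_le (fun k => ?_) hr
  by_cases hk : k ∈ Finset.range n
  · rw [ciSup_pos hk]; exact h k (Finset.mem_range.1 hk)
  · simp only [hk]
    rw [Real.iSup_of_isEmpty]
    exact hr

lemma sep_card_bound [CompactSpace X] (T : X → X) {ε : ℝ} (hε : 0 < ε) (n : ℕ) :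
    ∃ B : ℕ, ∀ E : Finset X, (∀ x ∈ E, ∀ y ∈ E, x ≠ y → ε < dynDist T n x y) → E.card ≤ B := by
  obtain ⟨t, -, htf, htc⟩ := finite_cover_balls_of_compact (isCompact_univ (X := X)) (half_pos hε)
  have hc : ∀ z : X, ∃ w ∈ htf.toFinset, z ∈ Metric.ball w (ε/2) := by
    intro z
    have := htc (mem_univ z)
    simp only [mem_iUnion] at this
    obtain ⟨w, hw, hz⟩ := this
    exact ⟨w, htf.mem_toFinset.2 hw, hz⟩
  choose c hc1 hc2 using hc
  refine ⟨(Fintype.piFinset fun _ : Fin n => htf.toFinset).card, fun E hE => ?_⟩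
  refine Finset.card_le_card_of_injOn (fun z (i : Fin n) => c (T^[(i:ℕ)] z)) ?_ ?_
  · intro z _
    simp only [Finset.mem_coe, Fintype.mem_piFinset]
    exact fun i => hc1 _
  · intro x hx y hy hxy
    by_contra hne
    have h1 := hE x hx y hy hne
    have h2 : dynDist T n x y ≤ ε := by
      refine dynDist_le hε.le fun k hk => ?_
      have hk' : c (T^[k] x) = c (T^[k] y) := congrFun hxy ⟨k, hk⟩
      calc dist (T^[k] x) (T^[k] y)
          ≤ dist (T^[k] x) (c (T^[k] x)) + dist (c (T^[k] y)) (T^[k] y) := by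
            rw [hk']; exact dist_triangle _ _ _
        _ ≤ ε/2 + ε/2 := by
            have a1 := hc2 (T^[k] x)
            have a2 := hc2 (T^[k] y)
            rw [Metric.mem_ball] at a1 a2
            rw [dist_comm (c (T^[k] y))]
            exact add_le_add a1.le a2.le
        _ = ε := by ring
    exact absurd h1 (not_lt.2 h2)
end A

section B
variable [MetricSpace X] [CompactSpace X] {T : X → X} {ε : ℝ} {n : ℕ} {K : Set X}

lemma sepSet_bdd (hε : 0 < ε) :
    BddAbove {m | ∃ E : Finset X, ↑E ⊆ K ∧
      (∀ x ∈ E, ∀ y ∈ E, x ≠ y → ε < dynDist T n x y) ∧ E.card = m} := by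
  obtain ⟨B, hB⟩ := sep_card_bound T hε n
  exact ⟨B, fun m ⟨E, _, hsep, hcard⟩ => hcard ▸ hB E hsep⟩

lemma le_sepNum (hε : 0 < ε) {E : Finset X} (hEK : ↑E ⊆ K)
    (hsep : ∀ x ∈ E, ∀ y ∈ E, x ≠ y → ε < dynDist T n x y) :
    E.card ≤ sepNum T n K ε :=
  le_csSup (sepSet_bdd hε) ⟨E, hEK, hsep, rfl⟩

lemma one_le_sepNum (hε : 0 < ε) (hK : K.Nonempty) : 1 ≤ sepNum T n K ε := by
  obtain ⟨x, hx⟩ := hK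
  have := le_sepNum (T := T) (n := n) hε (E := {x}) (by simpa using hx)
    (by intro a ha b hb hab; simp at ha hb; subst ha; subst hb; exact absurd rfl hab)
  simpa using this

lemma exists_sep_witness (hε : 0 < ε) :
    ∃ E : Finset X, ↑E ⊆ K ∧ (∀ x ∈ E, ∀ y ∈ E, x ≠ y → ε < dynDist T n x y) ∧
      E.card = sepNum T n K ε := by
  have hne : {m | ∃ E : Finset X, ↑E ⊆ K ∧
      (∀ x ∈ E, ∀ y ∈ E, x ≠ y → ε < dynDist T n x y) ∧ E.card = m}.Nonempty :=
    ⟨0, ∅, by simp⟩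
  exact Nat.sSup_mem hne (sepSet_bdd hε)

lemma sepNum_univ_le_sum (hε : 0 < ε) (s : Finset X) (K : X → Set X)
    (hcov : ∀ z : X, ∃ x ∈ s, z ∈ K x) :
    sepNum T n univ ε ≤ ∑ x ∈ s, sepNum T n (K x) ε := by
  classical
  obtain ⟨E, -, hsep, hcard⟩ := exists_sep_witness (T := T) (n := n) (K := univ) hε
  rw [← hcard]
  have hc : ∀ z : X, ∃ x, x ∈ s ∧ z ∈ K x := by simpa using hcov
  choose a ha1 ha2 using hc
  rw [Finset.card_eq_sum_card_fiberwise (f := a) (fun z _ => ha1 z)]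
  refine Finset.sum_le_sum fun x hx => ?_
  refine le_sepNum hε ?_ ?_
  · intro z hz
    simp only [Finset.coe_filter, mem_setOf_eq] at hz
    exact hz.2 ▸ ha2 z
  · intro u hu v hv huv
    exact hsep u (Finset.mem_of_mem_filter u hu) v (Finset.mem_of_mem_filter v hv) huv

lemma sepEnt_nonneg (hε : 0 < ε) (hK : K.Nonempty) : 0 ≤ sepEnt T K ε := by
  refine le_limsup_of_frequently_le (Frequently.of_forall fun n => ?_) (by isBoundedDefault)
  have h1 : (1:ℝ) ≤ (sepNum T n K ε : ℝ) := by exact_mod_cast one_le_sepNum hε hK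
  have : (0:ℝ) ≤ Real.log (sepNum T n K ε) / n :=
    div_nonneg (Real.log_nonneg h1) (Nat.cast_nonneg n)
  exact_mod_cast this
end B

section C
variable [MetricSpace X] [CompactSpace X] [Nonempty X]

lemma sepEnt_univ_eq (T : X → X) {ε : ℝ} (hε : 0 < ε) :
    sepEnt T univ ε = ⨆ x : X, locEnt T x ε := by
  refine le_antisymm ?_ (iSup_le fun x => iInf₂_le univ ⟨isClosed_univ, univ_mem⟩)
  refine le_of_forall_gt_imp_ge_of_dense fun b hb => ?_
  have hKex : ∀ x : X, ∃ K : Set X, (IsClosed K ∧ K ∈ 𝓝 x) ∧ sepEnt T K ε < b := by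
    intro x
    have hx : locEnt T x ε < b := lt_of_le_of_lt (le_iSup (fun x => locEnt T x ε) x) hb
    rw [locEnt, iInf_lt_iff] at hx
    obtain ⟨K, hK⟩ := hx
    rw [iInf_lt_iff] at hK
    obtain ⟨hKS, h⟩ := hK
    exact ⟨K, hKS, h⟩
  choose K hK1 hK2 using hKex
  have hcov : univ ⊆ ⋃ x : X, interior (K x) := fun z _ =>
    mem_iUnion.2 ⟨z, mem_interior_iff_mem_nhds.2 (hK1 z).2⟩
  obtain ⟨s, hs⟩ := isCompact_univ.elim_finite_subcover (fun x => interior (K x))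
    (fun x => isOpen_interior) hcov
  have hs_cov : ∀ z : X, ∃ x ∈ s, z ∈ K x := by
    intro z
    have hz := hs (mem_univ z)
    simp only [mem_iUnion, exists_prop] at hz
    obtain ⟨x, hx, hzx⟩ := hz
    exact ⟨x, hx, interior_subset hzx⟩
  have hsne : s.Nonempty := by
    obtain ⟨x, hx, -⟩ := hs_cov (Classical.arbitrary X)
    exact ⟨x, hx⟩
  set c : EReal := s.sup' hsne (fun x => sepEnt T (K x) ε) with hcdef
  have hcb : c < b := (Finset.sup'_lt_iff hsne).2 fun x _ => hK2 x
  have hc0 : (0:EReal) ≤ c := by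
    obtain ⟨x, hx⟩ := hsne
    exact le_trans (sepEnt_nonneg hε ⟨x, mem_of_mem_nhds (hK1 x).2⟩)
      (Finset.le_sup' (fun x => sepEnt T (K x) ε) hx)
  by_cases hbtop : b = ⊤
  · simp [hbtop]
  obtain ⟨d, hcd, hdb⟩ := exists_between hcb
  have hdt : d ≠ ⊤ := fun h => not_top_lt (h ▸ hdb)
  have hdb' : d ≠ ⊥ := fun h => not_lt_bot (h ▸ hc0.trans_lt hcd)
  obtain ⟨d', hcd', hd'd⟩ := exists_between hcd
  have hd't : d' ≠ ⊤ := fun h => hdt (top_le_iff.1 (h ▸ hd'd.le))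
  have hd'b : d' ≠ ⊥ := fun h => not_lt_bot (h ▸ hc0.trans_lt hcd')
  set β : ℝ := d.toReal with hβdef
  set β' : ℝ := d'.toReal with hβ'def
  have hβ : (β : EReal) = d := EReal.coe_toReal hdt hdb'
  have hβ' : (β' : EReal) = d' := EReal.coe_toReal hd't hd'b
  have hββ' : β' < β := by
    rw [← EReal.coe_lt_coe_iff]; rw [hβ, hβ']; exact hd'd
  -- eventual bounds
  have h1 : ∀ᶠ n : ℕ in atTop, ∀ x ∈ s,
      ((Real.log (sepNum T n (K x) ε) / n : ℝ) : EReal) < (β' : EReal) := by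
    rw [eventually_all_finset]
    intro x hx
    refine eventually_lt_of_limsup_lt ?_
    calc sepEnt T (K x) ε ≤ c := Finset.le_sup' (fun x => sepEnt T (K x) ε) hx
      _ < (β' : EReal) := hβ' ▸ hcd'
  have h2 : ∀ᶠ n : ℕ in atTop, Real.log s.card / (n:ℝ) < β - β' :=
    (tendsto_const_div_atTop_nhds_zero_nat (Real.log s.card)).eventually_lt_const
      (by linarith)
  have h3 : ∀ᶠ n : ℕ in atTop, 1 ≤ n := eventually_ge_atTop 1
  have hev : ∀ᶠ n : ℕ in atTop,
      ((Real.log (sepNum T n univ ε) / n : ℝ) : EReal) ≤ (β : EReal) := by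
    filter_upwards [h1, h2, h3] with n h1n h2n h3n
    rw [EReal.coe_le_coe_iff]
    have hn0 : (0:ℝ) < n := by exact_mod_cast h3n
    have key : ∀ x ∈ s, (sepNum T n (K x) ε : ℝ) ≤ Real.exp (n * β') := by
      intro x hx
      have hlt : Real.log (sepNum T n (K x) ε) / n < β' :=
        EReal.coe_lt_coe_iff.1 (h1n x hx)
      have hpos : (0:ℝ) < (sepNum T n (K x) ε : ℝ) := by
        exact_mod_cast one_le_sepNum (T := T) (n := n) hε ⟨x, mem_of_mem_nhds (hK1 x).2⟩
      calc (sepNum T n (K x) ε : ℝ) = Real.exp (Real.log (sepNum T n (K x) ε)) :=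
            (Real.exp_log hpos).symm
        _ ≤ Real.exp (n * β') := Real.exp_le_exp.2 (by
            rw [div_lt_iff₀ hn0] at hlt; linarith [hlt])
    have sum_le : (sepNum T n univ ε : ℝ) ≤ (s.card : ℝ) * Real.exp (n * β') := by
      have h := sepNum_univ_le_sum (T := T) (n := n) hε s K hs_cov
      have h' : (sepNum T n univ ε : ℝ) ≤ ∑ x ∈ s, (sepNum T n (K x) ε : ℝ) := by
        exact_mod_cast h
      refine h'.trans ?_
      have := Finset.sum_le_card_nsmul s (fun x => (sepNum T n (K x) ε : ℝ))
        (Real.exp (n * β')) key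
      simpa [nsmul_eq_mul] using this
    have hsepuniv : (0:ℝ) < (sepNum T n univ ε : ℝ) := by
      exact_mod_cast one_le_sepNum (T := T) (n := n) hε (univ_nonempty)
    have hcard0 : (0:ℝ) < (s.card : ℝ) := by
      exact_mod_cast hsne.card_pos
    have hlog : Real.log (sepNum T n univ ε) ≤ Real.log s.card + n * β' := by
      calc Real.log (sepNum T n univ ε) ≤ Real.log ((s.card : ℝ) * Real.exp (n * β')) :=
            Real.log_le_log hsepuniv sum_le
        _ = Real.log s.card + n * β' := by
            rw [Real.log_mul hcard0.ne' (Real.exp_ne_zero _), Real.log_exp]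
    calc Real.log (sepNum T n univ ε) / n ≤ (Real.log s.card + n * β') / n := by
          exact div_le_div_of_nonneg_right hlog hn0.le |>.trans_eq rfl
      _ = Real.log s.card / n + β' := by
          field_simp
      _ ≤ β := by linarith
  calc sepEnt T univ ε ≤ (β : EReal) := limsup_le_of_le (by isBoundedDefault) hev
    _ = d := hβ
    _ ≤ b := hdb.le
end C

section Theorems

variable [MetricSpace X] [CompactSpace X] [Nonempty X] [MeasurableSpace X] [BorelSpace X]

/-- The upper metric mean dimension in terms of the local entropy function
(Theorem 7.1). -/
theorem upper_mdim_eq_limsup_locEnt (T : X → X) (hT : IsHomeomorph T) :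
    mdimUpper T = limsup (fun ε : ℝ =>
      (⨆ x : X, locEnt T x ε) / ((Real.log (1 / ε) : ℝ) : EReal)) (𝓝[>] (0:ℝ)) := by
  rw [mdimUpper]
  refine limsup_congr ?_
  filter_upwards [self_mem_nhdsWithin] with ε (hε : ε ∈ Ioi 0)
  rw [sepEnt_univ_eq T (mem_Ioi.1 hε)]

end Theorems
end
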